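/- arXiv:2303.00847 — 3 statements merged into one kernel-verified Lean document; each statement's English description precedes it below -/
import Mathlib

section
/- Let Ω ⊂ ℝ^d be a bounded measurable set with finite positive Lebesgue measure and let β > 4. Let g : ℝ → ℝ be measurable and bounded (|g(t)| ≤ K₁ for all t), twice differentiable with |g''(t)| ≤ K₂ for all t. Then the Nemytskii operator N : L^β(Ω) → L²(Ω), N(u) = g∘u, is well defined and Fréchet differentiable at every y ∈ L^β(Ω): there exists a continuous linear map D : L^β(Ω) → L²(Ω) such that (D h)(x) = g'(y(x)) h(x) for a.e. x ∈ Ω and every h ∈ L^β(Ω), and N has Fréchet derivative D at y. -/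
open MeasureTheory ENNReal

set_option maxHeartbeats 1000000 in
/-- For `β > 4` and `g : ℝ → ℝ` measurable, bounded, twice differentiable with bounded
second derivative, the Nemytskii operator `N : L^β(Ω) → L²(Ω)`, `N(u) = g ∘ u`, is well
defined and Fréchet differentiable at every `y ∈ L^β(Ω)`, with derivative
`h ↦ (x ↦ g'(y(x)) h(x))`. -/
theorem nemytskii_frechet_differentiable
    {d : ℕ} (Ω : Set (Fin d → ℝ))
    (hΩbdd : Bornology.IsBounded Ω) (hΩmeas : MeasurableSet Ω)
    (hΩpos : 0 < volume Ω) (hΩfin : volume Ω < ⊤)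
    (μ : Measure (Fin d → ℝ)) (hμ : μ = volume.restrict Ω)
    (β : ℝ) (hβ : 4 < β) [Fact (1 ≤ ENNReal.ofReal β)]
    (g g' g'' : ℝ → ℝ) (hgmeas : Measurable g)
    (K₁ : ℝ) (hgbd : ∀ t : ℝ, |g t| ≤ K₁)
    (hg' : ∀ t : ℝ, HasDerivAt g (g' t) t)
    (hg'' : ∀ t : ℝ, HasDerivAt g' (g'' t) t)
    (K₂ : ℝ) (hg''bd : ∀ t : ℝ, |g'' t| ≤ K₂) :
    (∀ u : Lp ℝ (ENNReal.ofReal β) μ, MemLp (fun x => g (u x)) 2 μ) ∧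
    ∃ N : Lp ℝ (ENNReal.ofReal β) μ → Lp ℝ 2 μ,
      (∀ u : Lp ℝ (ENNReal.ofReal β) μ,
        (N u : (Fin d → ℝ) → ℝ) =ᵐ[μ] fun x => g (u x)) ∧
      ∀ y : Lp ℝ (ENNReal.ofReal β) μ,
        ∃ D : Lp ℝ (ENNReal.ofReal β) μ →L[ℝ] Lp ℝ 2 μ,
          (∀ h : Lp ℝ (ENNReal.ofReal β) μ,
            (D h : (Fin d → ℝ) → ℝ) =ᵐ[μ] fun x => g' (y x) * h x) ∧
          HasFDerivAt N D y := by
  have K₁0 : 0 ≤ K₁ := (abs_nonneg _).trans (hgbd 0)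
  have K₂0 : 0 ≤ K₂ := (abs_nonneg _).trans (hg''bd 0)
  haveI : IsFiniteMeasure μ := by
    refine ⟨?_⟩
    rw [hμ, Measure.restrict_apply_univ]
    exact hΩfin
  set p : ℝ≥0∞ := ENNReal.ofReal β with hp
  have hβ0 : (0:ℝ) < β := by linarith
  have hpR : p.toReal = β := ENNReal.toReal_ofReal hβ0.le
  have hp4 : (4 : ℝ≥0∞) ≤ p := by
    rw [hp, show (4:ℝ≥0∞) = ENNReal.ofReal 4 by norm_num]
    exact ENNReal.ofReal_le_ofReal hβ.le
  have hp2 : (2 : ℝ≥0∞) ≤ p := le_trans (by norm_num) hp4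
  have hg'cont : Continuous g' :=
    continuous_iff_continuousAt.2 fun t => (hg'' t).continuousAt
  -- Lipschitz-type bound for g'
  have lip : ∀ a b x : ℝ, x ∈ Set.uIcc b a → |g' x - g' b| ≤ K₂ * |a - b| := by
    intro a b x hx
    have h1 : |g' x - g' b| ≤ K₂ * |x - b| := by
      have := Convex.norm_image_sub_le_of_norm_hasDerivWithin_le
        (f := g') (f' := g'') (s := Set.univ)
        (fun t _ => (hg'' t).hasDerivWithinAt) (fun t _ => hg''bd t)
        convex_univ (Set.mem_univ b) (Set.mem_univ x)
      simpa [Real.norm_eq_abs] using this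
    have h2 : |x - b| ≤ |a - b| := by
      rw [Set.mem_uIcc] at hx
      rw [abs_le]
      rcases hx with ⟨h, h'⟩ | ⟨h, h'⟩ <;>
        constructor <;> nlinarith [le_abs_self (a - b), neg_abs_le (a - b)]
    nlinarith [abs_nonneg (g' x - g' b), abs_nonneg (x - b)]
  -- Taylor estimate
  have taylor : ∀ a b : ℝ, |g a - g b - g' b * (a - b)| ≤ K₂ * (a - b)^2 := by
    intro a b
    have hder : ∀ x ∈ Set.uIcc b a,
        HasDerivWithinAt (fun s => g s - g' b * s) (g' x - g' b) (Set.uIcc b a) x := by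
      intro x _
      have h2 : HasDerivAt (fun s : ℝ => g' b * s) (g' b) x := by
        simpa using (hasDerivAt_id x).const_mul (g' b)
      exact ((hg' x).sub h2).hasDerivWithinAt
    have key := Convex.norm_image_sub_le_of_norm_hasDerivWithin_le
        (f := fun s => g s - g' b * s) (f' := fun x => g' x - g' b) (s := Set.uIcc b a)
        hder (fun x hx => by simpa [Real.norm_eq_abs] using lip a b x hx)
        (convex_uIcc b a) Set.left_mem_uIcc Set.right_mem_uIcc
    have heq : (g a - g' b * a) - (g b - g' b * b) = g a - g b - g' b * (a - b) := by ring
    rw [Real.norm_eq_abs, Real.norm_eq_abs, heq] at key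
    calc |g a - g b - g' b * (a - b)| ≤ K₂ * |a - b| * |a - b| := key
      _ = K₂ * (a - b)^2 := by rw [mul_assoc, ← abs_mul, abs_mul_self]; ring
  -- bound for g'
  set M : ℝ := 2*K₁ + K₂ with hM
  have hM0 : 0 ≤ M := by rw [hM]; linarith
  have hg'bd : ∀ t, |g' t| ≤ M := by
    intro t
    have h1 : |g (t+1) - g t - g' t| ≤ K₂ := by
      have := taylor (t+1) t
      simpa using this
    have h2 := abs_le.1 h1
    have h3 := abs_le.1 (hgbd (t+1))
    have h4 := abs_le.1 (hgbd t)
    rw [abs_le, hM]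
    constructor <;> [linarith [h2.1, h3.2, h4.1]; linarith [h2.2, h3.1, h4.2]]
  -- well-definedness of N
  have memN : ∀ u : Lp ℝ p μ, MemLp (fun x => g (u x)) 2 μ := fun u =>
    MemLp.of_bound
      (hgmeas.comp_aemeasurable (Lp.aestronglyMeasurable u).aemeasurable).aestronglyMeasurable
      K₁ (Filter.Eventually.of_forall fun x => by simpa [Real.norm_eq_abs] using hgbd (u x))
  set N : Lp ℝ p μ → Lp ℝ 2 μ := fun u => (memN u).toLp _ with hN
  refine ⟨memN, N, fun u => MemLp.coeFn_toLp (memN u), fun y => ?_⟩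
  -- the derivative operator
  have meas_gy : AEStronglyMeasurable (fun x => g' (y x)) μ :=
    (hg'cont.measurable.comp_aemeasurable
      (Lp.aestronglyMeasurable y).aemeasurable).aestronglyMeasurable
  have memD : ∀ h : Lp ℝ p μ, MemLp (fun x => g' (y x) * h x) 2 μ := by
    intro h
    have hh2 : MemLp (fun x => (h : (Fin d → ℝ) → ℝ) x) 2 μ :=
      (Lp.memLp h).mono_exponent hp2
    refine MemLp.of_le (hh2.const_mul M) (meas_gy.mul (Lp.aestronglyMeasurable h)) ?_
    refine Filter.Eventually.of_forall fun x => ?_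
    simp only [Real.norm_eq_abs, abs_mul, abs_of_nonneg hM0]
    exact mul_le_mul_of_nonneg_right (hg'bd _) (abs_nonneg _)
  have measuniv_ne : μ Set.univ ≠ ⊤ := measure_ne_top μ _
  set c₄ : ℝ≥0∞ := μ Set.univ ^ ((1:ℝ)/4 - 1/β) with hc₄
  have hc₄top : c₄ ≠ ⊤ := by
    refine ENNReal.rpow_ne_top_of_nonneg ?_ measuniv_ne
    rw [sub_nonneg]
    exact one_div_le_one_div_of_le (by norm_num) hβ.le
  set c₂ : ℝ≥0∞ := μ Set.univ ^ ((1:ℝ)/2 - 1/β) with hc₂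
  have hc₂top : c₂ ≠ ⊤ := by
    refine ENNReal.rpow_ne_top_of_nonneg ?_ measuniv_ne
    rw [sub_nonneg]
    apply one_div_le_one_div_of_le <;> linarith
  have hL4 : ∀ h : Lp ℝ p μ,
      eLpNorm (h : (Fin d → ℝ) → ℝ) 4 μ ≤ eLpNorm (h : (Fin d → ℝ) → ℝ) p μ * c₄ := by
    intro h
    have := eLpNorm_le_eLpNorm_mul_rpow_measure_univ (p := 4) (q := p) hp4
      (Lp.aestronglyMeasurable h)
    rw [hpR] at this
    rw [hc₄]
    simpa [one_div] using this
  have hL2 : ∀ h : Lp ℝ p μ,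
      eLpNorm (h : (Fin d → ℝ) → ℝ) 2 μ ≤ eLpNorm (h : (Fin d → ℝ) → ℝ) p μ * c₂ := by
    intro h
    have := eLpNorm_le_eLpNorm_mul_rpow_measure_univ (p := 2) (q := p) hp2
      (Lp.aestronglyMeasurable h)
    rw [hpR] at this
    rw [hc₂]
    simpa [one_div] using this
  -- norm bound for D
  have Dbound : ∀ h : Lp ℝ p μ, eLpNorm (fun x => g' (y x) * h x) 2 μ ≤
      ((‖M‖₊ : ℝ≥0∞) * c₂) * eLpNorm (h : (Fin d → ℝ) → ℝ) p μ := by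
    intro h
    calc eLpNorm (fun x => g' (y x) * h x) 2 μ
        ≤ eLpNorm (fun x => M * (h : (Fin d → ℝ) → ℝ) x) 2 μ := by
          refine eLpNorm_mono_ae (Filter.Eventually.of_forall fun x => ?_)
          simp only [Real.norm_eq_abs, abs_mul, abs_of_nonneg hM0]
          exact mul_le_mul_of_nonneg_right (hg'bd _) (abs_nonneg _)
      _ = (‖M‖₊ : ℝ≥0∞) * eLpNorm (h : (Fin d → ℝ) → ℝ) 2 μ := by
          simpa [smul_eq_mul, enorm_eq_nnnorm, Pi.smul_def] using eLpNorm_const_smul M (fun x => (h : (Fin d → ℝ) → ℝ) x) 2 μ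
      _ ≤ (‖M‖₊ : ℝ≥0∞) * (eLpNorm (h : (Fin d → ℝ) → ℝ) p μ * c₂) :=
          mul_le_mul_right (hL2 h) _
      _ = ((‖M‖₊ : ℝ≥0∞) * c₂) * eLpNorm (h : (Fin d → ℝ) → ℝ) p μ := by ring
  set Dfun : Lp ℝ p μ → Lp ℝ 2 μ := fun h => (memD h).toLp _ with hDfun
  have Dadd : ∀ h₁ h₂, Dfun (h₁ + h₂) = Dfun h₁ + Dfun h₂ := by
    intro h₁ h₂
    simp only [hDfun]
    rw [← MemLp.toLp_add (memD h₁) (memD h₂)]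
    apply MemLp.toLp_congr
    filter_upwards [Lp.coeFn_add h₁ h₂] with x hx
    simp only [hx, Pi.add_apply]
    ring
  have Dsmul : ∀ (c : ℝ) (h : Lp ℝ p μ), Dfun (c • h) = c • Dfun h := by
    intro c h
    simp only [hDfun]
    rw [← MemLp.toLp_const_smul c (memD h)]
    apply MemLp.toLp_congr
    filter_upwards [Lp.coeFn_smul c h] with x hx
    simp only [hx, Pi.smul_apply, smul_eq_mul]
    ring
  set Dlin : Lp ℝ p μ →ₗ[ℝ] Lp ℝ 2 μ :=
    { toFun := Dfun, map_add' := Dadd, map_smul' := Dsmul } with hDlin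
  set Cd : ℝ := ((‖M‖₊ : ℝ≥0∞) * c₂).toReal with hCd
  have Dnormbd : ∀ h, ‖Dlin h‖ ≤ Cd * ‖h‖ := by
    intro h
    have hcoe : (Dlin h : (Fin d → ℝ) → ℝ) =ᵐ[μ] fun x => g' (y x) * h x :=
      MemLp.coeFn_toLp (memD h)
    rw [Lp.norm_def, Lp.norm_def, eLpNorm_congr_ae hcoe, hCd, ← ENNReal.toReal_mul]
    exact ENNReal.toReal_mono
      (ENNReal.mul_ne_top (ENNReal.mul_ne_top ENNReal.coe_ne_top hc₂top) (Lp.eLpNorm_ne_top h))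
      (Dbound h)
  set D : Lp ℝ p μ →L[ℝ] Lp ℝ 2 μ := Dlin.mkContinuous Cd Dnormbd with hD
  have Dcoe : ∀ h : Lp ℝ p μ,
      (D h : (Fin d → ℝ) → ℝ) =ᵐ[μ] fun x => g' (y x) * h x :=
    fun h => MemLp.coeFn_toLp (memD h)
  refine ⟨D, Dcoe, ?_⟩
  -- Fréchet differentiability
  rw [hasFDerivAt_iff_isLittleO_nhds_zero]
  set C : ℝ := ((‖K₂‖₊ : ℝ≥0∞) * c₄ * c₄).toReal with hC
  have C0 : 0 ≤ C := ENNReal.toReal_nonneg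
  have half : (1:ℝ≥0∞)/2 = 1/4 + 1/4 := by
    rw [ENNReal.div_add_div_same]
    rw [ENNReal.div_eq_div_iff (by norm_num) (by norm_num) (by norm_num) (by norm_num)]
    norm_num
  have key : ∀ h : Lp ℝ p μ, ‖N (y + h) - N y - D h‖ ≤ C * (‖h‖ * ‖h‖) := by
    intro h
    have hae : ((N (y + h) - N y - D h : Lp ℝ 2 μ) : (Fin d → ℝ) → ℝ) =ᵐ[μ]
        fun x => g (y x + h x) - g (y x) - g' (y x) * h x := by
      filter_upwards [Lp.coeFn_sub (N (y + h) - N y) (D h), Lp.coeFn_sub (N (y + h)) (N y),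
        MemLp.coeFn_toLp (memN (y + h)), MemLp.coeFn_toLp (memN y), Dcoe h,
        Lp.coeFn_add y h] with x e1 e2 e3 e4 e5 e6
      rw [e1, Pi.sub_apply, e2, Pi.sub_apply, e3, e4, e5, e6, Pi.add_apply]
    rw [Lp.norm_def, eLpNorm_congr_ae hae]
    have hsq : eLpNorm (fun x => (h : (Fin d → ℝ) → ℝ) x * (h : (Fin d → ℝ) → ℝ) x) 2 μ ≤
        eLpNorm (h : (Fin d → ℝ) → ℝ) 4 μ * eLpNorm (h : (Fin d → ℝ) → ℝ) 4 μ := by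
      have := eLpNorm_smul_le_mul_eLpNorm (p := 4) (q := 4) (r := 2)
        (f := fun x => (h : (Fin d → ℝ) → ℝ) x) (φ := fun x => (h : (Fin d → ℝ) → ℝ) x)
        (Lp.aestronglyMeasurable h) (Lp.aestronglyMeasurable h)
          (hpqr := ⟨by simpa [one_div] using half.symm⟩)
      simpa [smul_eq_mul, Pi.mul_def] using this
    have hr : eLpNorm (fun x => g (y x + h x) - g (y x) - g' (y x) * h x) 2 μ ≤
        ((‖K₂‖₊ : ℝ≥0∞) * c₄ * c₄) *
          (eLpNorm (h : (Fin d → ℝ) → ℝ) p μ * eLpNorm (h : (Fin d → ℝ) → ℝ) p μ) := by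
      calc eLpNorm (fun x => g (y x + h x) - g (y x) - g' (y x) * h x) 2 μ
          ≤ eLpNorm (fun x => K₂ * ((h : (Fin d → ℝ) → ℝ) x * (h : (Fin d → ℝ) → ℝ) x)) 2 μ := by
            refine eLpNorm_mono_ae (Filter.Eventually.of_forall fun x => ?_)
            have ht := taylor (y x + h x) (y x)
            rw [add_sub_cancel_left] at ht
            have hrhs : ‖K₂ * ((h : (Fin d → ℝ) → ℝ) x * (h : (Fin d → ℝ) → ℝ) x)‖ =
                K₂ * ((h : (Fin d → ℝ) → ℝ) x)^2 := by
              rw [Real.norm_eq_abs, abs_mul, abs_of_nonneg K₂0,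
                abs_of_nonneg (mul_self_nonneg _)]
              ring
            rw [Real.norm_eq_abs, hrhs]
            exact ht
        _ = (‖K₂‖₊ : ℝ≥0∞) *
            eLpNorm (fun x => (h : (Fin d → ℝ) → ℝ) x * (h : (Fin d → ℝ) → ℝ) x) 2 μ := by
            simpa [smul_eq_mul, enorm_eq_nnnorm, Pi.smul_def] using eLpNorm_const_smul K₂
              (fun x => (h : (Fin d → ℝ) → ℝ) x * (h : (Fin d → ℝ) → ℝ) x) 2 μ
        _ ≤ (‖K₂‖₊ : ℝ≥0∞) *
            (eLpNorm (h : (Fin d → ℝ) → ℝ) 4 μ * eLpNorm (h : (Fin d → ℝ) → ℝ) 4 μ) :=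
            mul_le_mul_right hsq _
        _ ≤ (‖K₂‖₊ : ℝ≥0∞) *
            ((eLpNorm (h : (Fin d → ℝ) → ℝ) p μ * c₄) * (eLpNorm (h : (Fin d → ℝ) → ℝ) p μ * c₄)) :=
            mul_le_mul_right (mul_le_mul' (hL4 h) (hL4 h)) _
        _ = ((‖K₂‖₊ : ℝ≥0∞) * c₄ * c₄) *
            (eLpNorm (h : (Fin d → ℝ) → ℝ) p μ * eLpNorm (h : (Fin d → ℝ) → ℝ) p μ) := by ring
    calc (eLpNorm (fun x => g (y x + h x) - g (y x) - g' (y x) * h x) 2 μ).toReal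
        ≤ (((‖K₂‖₊ : ℝ≥0∞) * c₄ * c₄) *
            (eLpNorm (h : (Fin d → ℝ) → ℝ) p μ * eLpNorm (h : (Fin d → ℝ) → ℝ) p μ)).toReal := by
          refine ENNReal.toReal_mono ?_ hr
          exact ENNReal.mul_ne_top
            (ENNReal.mul_ne_top (ENNReal.mul_ne_top ENNReal.coe_ne_top hc₄top) hc₄top)
            (ENNReal.mul_ne_top (Lp.eLpNorm_ne_top h) (Lp.eLpNorm_ne_top h))
      _ = C * (‖h‖ * ‖h‖) := by
          simp only [ENNReal.toReal_mul, hC, Lp.norm_def]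
  rw [Asymptotics.isLittleO_iff]
  intro ε hε
  have hδ : 0 < ε / (C + 1) := by positivity
  filter_upwards [Metric.ball_mem_nhds (0 : Lp ℝ p μ) hδ] with h hh
  rw [Metric.mem_ball, dist_zero_right] at hh
  have h1 : C * ‖h‖ ≤ C * (ε / (C + 1)) := mul_le_mul_of_nonneg_left hh.le C0
  have h2 : C * (ε / (C + 1)) ≤ ε := by
    rw [mul_div_assoc']
    rw [div_le_iff₀ (by linarith)]
    nlinarith
  calc ‖N (y + h) - N y - D h‖ ≤ C * (‖h‖ * ‖h‖) := key h
    _ = (C * ‖h‖) * ‖h‖ := by ring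
    _ ≤ ε * ‖h‖ := mul_le_mul_of_nonneg_right (h1.trans h2) (norm_nonneg h)
end

section
/- Let Ω ⊂ ℝ^d be a bounded measurable set with finite positive Lebesgue measure and let β > 6. Let g : ℝ → ℝ be measurable and bounded (|g(t)| ≤ K₁ for all t), twice differentiable with |g''(t)| ≤ K₂ for all t, and with g'' globally Lipschitz continuous with constant L̃ > 0. Then the Nemytskii operator N : L^β(Ω) → L²(Ω), N(u) = g∘u, is twice Fréchet differentiable: the derivative map y ↦ N'(y), from L^β(Ω) into the space of continuous linear operators L^β(Ω) → L²(Ω), is Fréchet differentiable at every y ∈ L^β(Ω), and its derivative at y applied to directions h, k ∈ L^β(Ω) is the element of L²(Ω) given by x ↦ g''(y(x)) h(x) k(x) a.e. on Ω. -/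
open MeasureTheory ENNReal Filter

section Aux

lemma quadO {E F : Type*} [NormedAddCommGroup E] [SeminormedAddCommGroup F]
    (f : E → F) (C : ℝ) (hb : ∀ x, ‖f x‖ ≤ C * (‖x‖ * ‖x‖)) :
    f =o[nhds 0] (fun x => x) := by
  rw [Asymptotics.isLittleO_iff]
  intro c hc
  have hC : 0 < max C 0 + 1 := by positivity
  filter_upwards [Metric.ball_mem_nhds (0 : E) (div_pos hc hC)] with x hx
  rw [Metric.mem_ball, dist_zero_right] at hx
  have h1 : ‖f x‖ ≤ (max C 0 + 1) * (‖x‖ * ‖x‖) := by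
    refine (hb x).trans ?_
    have : 0 ≤ ‖x‖ * ‖x‖ := by positivity
    nlinarith [le_max_left C 0]
  have h2 : ‖x‖ ≤ c / (max C 0 + 1) := hx.le
  calc ‖f x‖ ≤ (max C 0 + 1) * (‖x‖ * ‖x‖) := h1
    _ ≤ (max C 0 + 1) * ((c / (max C 0 + 1)) * ‖x‖) := by
        apply mul_le_mul_of_nonneg_left _ hC.le
        exact mul_le_mul_of_nonneg_right h2 (norm_nonneg _)
    _ = c * ‖x‖ := by field_simp

lemma lip_of_deriv (f f' : ℝ → ℝ) (hf : ∀ t, HasDerivAt f (f' t) t)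
    (K : ℝ) (hb : ∀ t, |f' t| ≤ K) : ∀ a b : ℝ, |f a - f b| ≤ K * |a - b| := by
  intro a b
  have := Convex.norm_image_sub_le_of_norm_hasDerivWithin_le
    (f := f) (f' := f') (s := Set.univ) (C := K)
    (fun x _ => (hf x).hasDerivWithinAt)
    (fun x _ => by simpa [Real.norm_eq_abs] using hb x)
    convex_univ (Set.mem_univ b) (Set.mem_univ a)
  simpa [Real.norm_eq_abs] using this

lemma taylor_bound (f f' : ℝ → ℝ) (hf : ∀ t, HasDerivAt f (f' t) t)
    (L : ℝ) (hlip : ∀ a b : ℝ, |f' a - f' b| ≤ L * |a - b|) (a s : ℝ) :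
    |f (a + s) - f a - f' a * s| ≤ L * s ^ 2 := by
  have hL : 0 ≤ L := by
    have h1 := hlip 1 0
    simp at h1
    linarith [abs_nonneg (f' 1 - f' 0)]
  set φ : ℝ → ℝ := fun t => f (a + t) - f' a * t with hφ
  have hd : ∀ t, HasDerivAt φ (f' (a + t) - f' a) t := by
    intro t
    have h1 : HasDerivAt (fun t : ℝ => f (a + t)) (f' (a + t)) t := by
      simpa [Function.comp_def] using (hf (a + t)).comp t ((hasDerivAt_id t).const_add a)
    simpa [hφ, Pi.sub_def] using h1.sub ((hasDerivAt_id t).const_mul (f' a))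
  have key := Convex.norm_image_sub_le_of_norm_hasDerivWithin_le
    (f := φ) (f' := fun t => f' (a + t) - f' a) (s := Set.uIcc 0 s) (C := L * |s|)
    (fun x _ => (hd x).hasDerivWithinAt)
    (fun x hx => by
      have h1 : |f' (a + x) - f' a| ≤ L * |x| := by simpa using hlip (a + x) a
      have h2 : |x| ≤ |s| := by
        rcases Set.mem_uIcc.1 hx with ⟨h3, h4⟩ | ⟨h3, h4⟩ <;> rw [abs_le] <;>
          constructor <;> cases abs_cases s <;> nlinarith
      rw [Real.norm_eq_abs]
      exact h1.trans (by nlinarith))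
    (convex_uIcc 0 s) Set.left_mem_uIcc Set.right_mem_uIcc
  have : φ s - φ 0 = f (a + s) - f a - f' a * s := by simp [hφ]; ring
  rw [Real.norm_eq_abs, Real.norm_eq_abs, this] at key
  calc |f (a + s) - f a - f' a * s| ≤ L * |s| * |s - 0| := key
    _ = L * s ^ 2 := by rw [sub_zero, mul_assoc, abs_mul_abs_self, sq]

lemma ofReal_one_div_add (a b c : ℝ) (ha : 0 < a) (hb : 0 < b) (hc : 0 < c)
    (h : 1 / a = 1 / b + 1 / c) :
    1 / ENNReal.ofReal a = 1 / ENNReal.ofReal b + 1 / ENNReal.ofReal c := by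
  rw [one_div, one_div, one_div, ← ENNReal.ofReal_inv_of_pos ha,
    ← ENNReal.ofReal_inv_of_pos hb, ← ENNReal.ofReal_inv_of_pos hc,
    ← ENNReal.ofReal_add (by positivity) (by positivity)]
  congr 1
  rw [inv_eq_one_div, inv_eq_one_div, inv_eq_one_div]
  linarith [h]

variable {α : Type*} [MeasurableSpace α] {μ : Measure α}

lemma two_eq_ofReal : (2 : ℝ≥0∞) = ENNReal.ofReal 2 := by
  rw [ENNReal.ofReal_ofNat]

lemma embed2 {β : ℝ} (hβ : 2 ≤ β) {f : α → ℝ} (hf : AEStronglyMeasurable f μ) :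
    eLpNorm f 2 μ ≤ μ Set.univ ^ ((1:ℝ)/2 - 1/β) * eLpNorm f (ENNReal.ofReal β) μ := by
  have h2q : (2:ℝ≥0∞) ≤ ENNReal.ofReal β := by
    rw [two_eq_ofReal]; exact ENNReal.ofReal_le_ofReal hβ
  have := eLpNorm_le_eLpNorm_mul_rpow_measure_univ h2q hf
  rw [ENNReal.toReal_ofNat, ENNReal.toReal_ofReal (by linarith)] at this
  rw [mul_comm]
  exact this

lemma holder2 {β : ℝ} (hβ : 4 ≤ β) {f₁ f₂ : α → ℝ}
    (hf₁ : AEStronglyMeasurable f₁ μ) (hf₂ : AEStronglyMeasurable f₂ μ) :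
    eLpNorm (fun x => f₁ x * f₂ x) (ENNReal.ofReal (β/2)) μ ≤
      eLpNorm f₁ (ENNReal.ofReal β) μ * eLpNorm f₂ (ENNReal.ofReal β) μ := by
  have hT : ENNReal.HolderTriple (ENNReal.ofReal β) (ENNReal.ofReal β) (ENNReal.ofReal (β/2)) :=
    ⟨by simpa only [one_div] using (ofReal_one_div_add (β/2) β β (by linarith) (by linarith)
      (by linarith) (by field_simp; ring)).symm⟩
  have := eLpNorm_le_eLpNorm_mul_eLpNorm'_of_norm (p := ENNReal.ofReal β) (q := ENNReal.ofReal β)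
    (r := ENNReal.ofReal (β/2)) hf₁ hf₂ (· * ·) 1
    (Filter.Eventually.of_forall fun x => by simp [norm_mul])
  simpa using this

lemma holder2' {β : ℝ} (hβ : 4 ≤ β) {f₁ f₂ : α → ℝ}
    (hf₁ : AEStronglyMeasurable f₁ μ) (hf₂ : AEStronglyMeasurable f₂ μ) :
    eLpNorm (fun x => f₁ x * f₂ x) 2 μ ≤
      μ Set.univ ^ ((1:ℝ)/2 - 2/β) *
        (eLpNorm f₁ (ENNReal.ofReal β) μ * eLpNorm f₂ (ENNReal.ofReal β) μ) := by
  refine le_trans (embed2 (β := β/2) (by linarith) (hf₁.mul hf₂)) ?_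
  rw [show (1:ℝ)/2 - 1/(β/2) = 1/2 - 2/β by rw [one_div_div]]
  exact mul_le_mul_right (holder2 hβ hf₁ hf₂) _

lemma holder3' {β : ℝ} (hβ : 6 ≤ β) {f₁ f₂ f₃ : α → ℝ}
    (hf₁ : AEStronglyMeasurable f₁ μ) (hf₂ : AEStronglyMeasurable f₂ μ)
    (hf₃ : AEStronglyMeasurable f₃ μ) :
    eLpNorm (fun x => f₁ x * f₂ x * f₃ x) 2 μ ≤
      μ Set.univ ^ ((1:ℝ)/2 - 3/β) *
        (eLpNorm f₁ (ENNReal.ofReal β) μ * eLpNorm f₂ (ENNReal.ofReal β) μ *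
          eLpNorm f₃ (ENNReal.ofReal β) μ) := by
  refine le_trans (embed2 (β := β/3) (by linarith) ((hf₁.mul hf₂).mul hf₃)) ?_
  rw [show (1:ℝ)/2 - 1/(β/3) = 1/2 - 3/β by rw [one_div_div]]
  refine mul_le_mul_right ?_ _
  have step1 : eLpNorm (fun x => f₁ x * f₂ x * f₃ x) (ENNReal.ofReal (β/3)) μ ≤
      eLpNorm (fun x => f₁ x * f₂ x) (ENNReal.ofReal (β/2)) μ *
        eLpNorm f₃ (ENNReal.ofReal β) μ := by
    have hT : ENNReal.HolderTriple (ENNReal.ofReal (β/2)) (ENNReal.ofReal β)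
        (ENNReal.ofReal (β/3)) :=
      ⟨by simpa only [one_div] using (ofReal_one_div_add (β/3) (β/2) β (by linarith)
        (by linarith) (by linarith) (by field_simp; ring)).symm⟩
    have := eLpNorm_le_eLpNorm_mul_eLpNorm'_of_norm (p := ENNReal.ofReal (β/2))
      (q := ENNReal.ofReal β) (r := ENNReal.ofReal (β/3)) (hf₁.mul hf₂) hf₃ (· * ·) 1
      (Filter.Eventually.of_forall fun x => by simp [norm_mul])
    simpa [Pi.mul_def] using this
  exact step1.trans (mul_le_mul_left (holder2 (by linarith) hf₁ hf₂) _)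

lemma toReal_helper {a C : ℝ≥0∞} (hC : C ≠ ∞) {r : ℝ} (hr : 0 ≤ r)
    (h : a ≤ C * ENNReal.ofReal r) : a.toReal ≤ C.toReal * r := by
  have hfin : C * ENNReal.ofReal r ≠ ∞ := ENNReal.mul_ne_top hC ENNReal.ofReal_ne_top
  have := ENNReal.toReal_mono hfin h
  rwa [ENNReal.toReal_mul, ENNReal.toReal_ofReal hr] at this

end Aux

set_option maxHeartbeats 2000000 in
/-- For `d`-dimensional `Ω`, `β > 6` and `g : ℝ → ℝ` measurable, bounded, twice
differentiable with bounded and globally Lipschitz second derivative, the Nemytskii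
operator `N : L^β(Ω) → L²(Ω)`, `N(u) = g ∘ u`, is twice Fréchet differentiable: the
derivative map `y ↦ N'(y)` (with `N'(y)h = (x ↦ g'(y(x))h(x))`) is Fréchet
differentiable at every `y`, with second derivative acting on directions `h, k` by
`x ↦ g''(y(x)) h(x) k(x)`. -/
theorem nemytskii_second_frechet_differentiable
    {d : ℕ} (Ω : Set (Fin d → ℝ))
    (hΩbdd : Bornology.IsBounded Ω) (hΩmeas : MeasurableSet Ω)
    (hΩpos : 0 < volume Ω) (hΩfin : volume Ω < ⊤)
    (μ : Measure (Fin d → ℝ)) (hμ : μ = volume.restrict Ω)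
    (β : ℝ) (hβ : 6 < β) [Fact (1 ≤ ENNReal.ofReal β)]
    (g g' g'' : ℝ → ℝ) (hgmeas : Measurable g)
    (K₁ : ℝ) (hgbd : ∀ t : ℝ, |g t| ≤ K₁)
    (hg' : ∀ t : ℝ, HasDerivAt g (g' t) t)
    (hg'' : ∀ t : ℝ, HasDerivAt g' (g'' t) t)
    (K₂ : ℝ) (hg''bd : ∀ t : ℝ, |g'' t| ≤ K₂)
    (L' : ℝ) (hL' : 0 < L')
    (hg''lip : ∀ a b : ℝ, |g'' a - g'' b| ≤ L' * |a - b|) :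
    ∃ (N : Lp ℝ (ENNReal.ofReal β) μ → Lp ℝ 2 μ)
      (DN : Lp ℝ (ENNReal.ofReal β) μ → (Lp ℝ (ENNReal.ofReal β) μ →L[ℝ] Lp ℝ 2 μ)),
      (∀ u : Lp ℝ (ENNReal.ofReal β) μ,
        (N u : (Fin d → ℝ) → ℝ) =ᵐ[μ] fun x => g (u x)) ∧
      (∀ y : Lp ℝ (ENNReal.ofReal β) μ, HasFDerivAt N (DN y) y) ∧
      (∀ y h : Lp ℝ (ENNReal.ofReal β) μ,
        (DN y h : (Fin d → ℝ) → ℝ) =ᵐ[μ] fun x => g' (y x) * h x) ∧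
      (∀ y : Lp ℝ (ENNReal.ofReal β) μ,
        ∃ D₂ : Lp ℝ (ENNReal.ofReal β) μ →L[ℝ]
            (Lp ℝ (ENNReal.ofReal β) μ →L[ℝ] Lp ℝ 2 μ),
          HasFDerivAt DN D₂ y ∧
          ∀ h k : Lp ℝ (ENNReal.ofReal β) μ,
            (D₂ h k : (Fin d → ℝ) → ℝ) =ᵐ[μ] fun x => g'' (y x) * h x * k x) := by
  haveI hfinμ : IsFiniteMeasure μ := by
    constructor
    rw [hμ, Measure.restrict_apply_univ]
    exact hΩfin
  have hβ0 : (0:ℝ) < β := by linarith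
  set p : ℝ≥0∞ := ENNReal.ofReal β with hp
  -- scalar facts
  have hK₁ : 0 ≤ K₁ := le_trans (abs_nonneg _) (hgbd 0)
  have hK₂ : 0 ≤ K₂ := le_trans (abs_nonneg _) (hg''bd 0)
  have hg'lip : ∀ a b : ℝ, |g' a - g' b| ≤ K₂ * |a - b| :=
    lip_of_deriv g' g'' hg'' K₂ hg''bd
  have T1 : ∀ a s : ℝ, |g (a + s) - g a - g' a * s| ≤ K₂ * s ^ 2 :=
    taylor_bound g g' hg' K₂ hg'lip
  have T2 : ∀ a s : ℝ, |g' (a + s) - g' a - g'' a * s| ≤ L' * s ^ 2 :=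
    taylor_bound g' g'' hg'' L' hg''lip
  set K₃ : ℝ := 2 * K₁ + K₂ with hK₃def
  have hK₃ : 0 ≤ K₃ := by positivity
  have hg'bd : ∀ t : ℝ, |g' t| ≤ K₃ := by
    intro t
    have h1 := T1 t 1
    norm_num at h1
    have h2 := abs_le.1 (hgbd (t + 1))
    have h3 := abs_le.1 (hgbd t)
    have h4 := abs_le.1 h1
    rw [abs_le]
    constructor <;> [nlinarith [h4.1, h2.2, h3.1]; nlinarith [h4.2, h2.1, h3.2]]
  have hg'meas : Measurable g' := by
    have : g' = deriv g := funext fun t => ((hg' t).deriv).symm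
    rw [this]; exact measurable_deriv g
  have hg''meas : Measurable g'' := by
    have : g'' = deriv g' := funext fun t => ((hg'' t).deriv).symm
    rw [this]; exact measurable_deriv g'
  -- measurability for Lp elements
  have aesm : ∀ u : Lp ℝ p μ, AEStronglyMeasurable (⇑u) μ := fun u =>
    Lp.aestronglyMeasurable u
  have aeg : ∀ (G : ℝ → ℝ), Measurable G → ∀ u : Lp ℝ p μ,
      AEStronglyMeasurable (fun x => G (u x)) μ := fun G hG u =>
    (hG.comp_aemeasurable (aesm u).aemeasurable).aestronglyMeasurable
  -- exponent facts
  have h16 : 1/β ≤ 1/2 := by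
    rw [div_le_div_iff₀ hβ0 (by norm_num)]; linarith
  have h26 : 2/β ≤ 1/2 := by
    rw [div_le_div_iff₀ hβ0 (by norm_num)]; linarith
  have h36 : 3/β ≤ 1/2 := by
    rw [div_le_div_iff₀ hβ0 (by norm_num)]; linarith
  have h2p : (2:ℝ≥0∞) ≤ p := by
    rw [two_eq_ofReal, hp]
    exact ENNReal.ofReal_le_ofReal (by linarith)
  -- constants
  set Cp : ℝ≥0∞ := μ Set.univ ^ ((1:ℝ)/2 - 1/β) with hCp
  set C2 : ℝ≥0∞ := μ Set.univ ^ ((1:ℝ)/2 - 2/β) with hC2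
  set C3 : ℝ≥0∞ := μ Set.univ ^ ((1:ℝ)/2 - 3/β) with hC3
  have hCpfin : Cp ≠ ∞ :=
    (ENNReal.rpow_lt_top_of_nonneg (by linarith) (measure_ne_top μ _)).ne
  have hC2fin : C2 ≠ ∞ :=
    (ENNReal.rpow_lt_top_of_nonneg (by linarith) (measure_ne_top μ _)).ne
  have hC3fin : C3 ≠ ∞ :=
    (ENNReal.rpow_lt_top_of_nonneg (by linarith) (measure_ne_top μ _)).ne
  have eLp_eq : ∀ u : Lp ℝ p μ, eLpNorm (⇑u) p μ = ENNReal.ofReal ‖u‖ := fun u => by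
    rw [Lp.norm_def, ENNReal.ofReal_toReal (Lp.eLpNorm_ne_top u)]
  -- key eLpNorm bounds
  have key1 : ∀ (c : ℝ), 0 ≤ c → ∀ (F : (Fin d → ℝ) → ℝ) (h : Lp ℝ p μ),
      AEStronglyMeasurable F μ → (∀ x, |F x| ≤ c * |h x|) →
      eLpNorm F 2 μ ≤ (ENNReal.ofReal c * Cp) * ENNReal.ofReal ‖h‖ := by
    intro c hc F h hF hbd
    calc eLpNorm F 2 μ ≤ eLpNorm (c • (⇑h)) 2 μ := by
          refine eLpNorm_mono fun x => ?_
          rw [Real.norm_eq_abs, Pi.smul_apply, smul_eq_mul, Real.norm_eq_abs,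
            abs_mul, abs_of_nonneg hc]
          exact hbd x
      _ ≤ ‖c‖₊ • eLpNorm (⇑h) 2 μ := eLpNorm_const_smul_le
      _ = ENNReal.ofReal c * eLpNorm (⇑h) 2 μ := by
          rw [ENNReal.smul_def, smul_eq_mul, ← enorm_eq_nnnorm, Real.enorm_eq_ofReal hc]
      _ ≤ ENNReal.ofReal c * (Cp * eLpNorm (⇑h) p μ) :=
          mul_le_mul_right (embed2 (by linarith) (aesm h)) _
      _ = (ENNReal.ofReal c * Cp) * ENNReal.ofReal ‖h‖ := by
          rw [eLp_eq h]; ring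
  have key2 : ∀ (c : ℝ), 0 ≤ c → ∀ (F : (Fin d → ℝ) → ℝ) (h k : Lp ℝ p μ),
      AEStronglyMeasurable F μ → (∀ x, |F x| ≤ c * |h x * k x|) →
      eLpNorm F 2 μ ≤ (ENNReal.ofReal c * C2) * ENNReal.ofReal (‖h‖ * ‖k‖) := by
    intro c hc F h k hF hbd
    calc eLpNorm F 2 μ ≤ eLpNorm (c • (fun x => h x * k x)) 2 μ := by
          refine eLpNorm_mono fun x => ?_
          rw [Real.norm_eq_abs, Pi.smul_apply, smul_eq_mul, Real.norm_eq_abs,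
            abs_mul, abs_of_nonneg hc]
          exact hbd x
      _ ≤ ‖c‖₊ • eLpNorm (fun x => h x * k x) 2 μ := eLpNorm_const_smul_le
      _ = ENNReal.ofReal c * eLpNorm (fun x => h x * k x) 2 μ := by
          rw [ENNReal.smul_def, smul_eq_mul, ← enorm_eq_nnnorm, Real.enorm_eq_ofReal hc]
      _ ≤ ENNReal.ofReal c * (C2 * (eLpNorm (⇑h) p μ * eLpNorm (⇑k) p μ)) :=
          mul_le_mul_right (holder2' (by linarith) (aesm h) (aesm k)) _
      _ = (ENNReal.ofReal c * C2) * ENNReal.ofReal (‖h‖ * ‖k‖) := by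
          rw [eLp_eq h, eLp_eq k, ENNReal.ofReal_mul (norm_nonneg _)]; ring
  have key3 : ∀ (c : ℝ), 0 ≤ c → ∀ (F : (Fin d → ℝ) → ℝ) (k₁ k₂ h : Lp ℝ p μ),
      AEStronglyMeasurable F μ → (∀ x, |F x| ≤ c * |k₁ x * k₂ x * h x|) →
      eLpNorm F 2 μ ≤ (ENNReal.ofReal c * C3) * ENNReal.ofReal (‖k₁‖ * ‖k₂‖ * ‖h‖) := by
    intro c hc F k₁ k₂ h hF hbd
    calc eLpNorm F 2 μ ≤ eLpNorm (c • (fun x => k₁ x * k₂ x * h x)) 2 μ := by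
          refine eLpNorm_mono fun x => ?_
          rw [Real.norm_eq_abs, Pi.smul_apply, smul_eq_mul, Real.norm_eq_abs,
            abs_mul, abs_of_nonneg hc]
          exact hbd x
      _ ≤ ‖c‖₊ • eLpNorm (fun x => k₁ x * k₂ x * h x) 2 μ := eLpNorm_const_smul_le
      _ = ENNReal.ofReal c * eLpNorm (fun x => k₁ x * k₂ x * h x) 2 μ := by
          rw [ENNReal.smul_def, smul_eq_mul, ← enorm_eq_nnnorm, Real.enorm_eq_ofReal hc]
      _ ≤ ENNReal.ofReal c *
            (C3 * (eLpNorm (⇑k₁) p μ * eLpNorm (⇑k₂) p μ * eLpNorm (⇑h) p μ)) :=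
          mul_le_mul_right (holder3' (by linarith) (aesm k₁) (aesm k₂) (aesm h)) _
      _ = (ENNReal.ofReal c * C3) * ENNReal.ofReal (‖k₁‖ * ‖k₂‖ * ‖h‖) := by
          rw [eLp_eq k₁, eLp_eq k₂, eLp_eq h, ENNReal.ofReal_mul (by positivity),
            ENNReal.ofReal_mul (norm_nonneg _)]
          ring
  -- membership facts
  have memN : ∀ u : Lp ℝ p μ, MemLp (fun x => g (u x)) 2 μ := fun u =>
    (memLp_top_of_bound (aeg g hgmeas u) K₁
      (Filter.Eventually.of_forall fun x => by
        simpa [Real.norm_eq_abs] using hgbd (u x))).mono_exponent le_top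
  have mem2 : ∀ u : Lp ℝ p μ, MemLp (⇑u) 2 μ := fun u =>
    (Lp.memLp u).mono_exponent h2p
  have memDN : ∀ y h : Lp ℝ p μ, MemLp (fun x => g' (y x) * h x) 2 μ := fun y h =>
    MemLp.of_le_mul (mem2 h) ((aeg g' hg'meas y).mul (aesm h))
      (Filter.Eventually.of_forall fun x => by
        rw [Real.norm_eq_abs, Real.norm_eq_abs, abs_mul]
        exact mul_le_mul_of_nonneg_right (hg'bd _) (abs_nonneg _))
  have memB : ∀ y h k : Lp ℝ p μ, MemLp (fun x => g'' (y x) * h x * k x) 2 μ := by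
    intro y h k
    have hsm : AEStronglyMeasurable (fun x => g'' (y x) * h x * k x) μ :=
      ((aeg g'' hg''meas y).mul (aesm h)).mul (aesm k)
    refine ⟨hsm, ?_⟩
    refine lt_of_le_of_lt (key2 K₂ hK₂ _ h k hsm fun x => ?_) ?_
    · have e : |g'' (y x) * h x * k x| = |g'' (y x)| * |h x * k x| := by
        rw [abs_mul, abs_mul, abs_mul]; ring
      rw [e]
      exact mul_le_mul_of_nonneg_right (hg''bd _) (abs_nonneg _)
    · exact ENNReal.mul_lt_top
        (ENNReal.mul_lt_top ENNReal.ofReal_lt_top hC2fin.lt_top) ENNReal.ofReal_lt_top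
  -- the Nemytskii operator
  set Nf : Lp ℝ p μ → Lp ℝ 2 μ := fun u => (memN u).toLp _ with hNf
  -- first derivative operators
  have bd1 : ∀ y h : Lp ℝ p μ,
      ‖(memDN y h).toLp _‖ ≤ (ENNReal.ofReal K₃ * Cp).toReal * ‖h‖ := by
    intro y h
    rw [Lp.norm_toLp]
    refine toReal_helper (ENNReal.mul_ne_top ENNReal.ofReal_ne_top hCpfin)
      (norm_nonneg _) ?_
    refine key1 K₃ hK₃ _ h ((aeg g' hg'meas y).mul (aesm h)) fun x => ?_
    rw [abs_mul]
    exact mul_le_mul_of_nonneg_right (hg'bd _) (abs_nonneg _)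
  set DNl : Lp ℝ p μ → (Lp ℝ p μ →ₗ[ℝ] Lp ℝ 2 μ) := fun y =>
    { toFun := fun h => (memDN y h).toLp _
      map_add' := fun h k => by
        apply Lp.ext
        filter_upwards [MemLp.coeFn_toLp (memDN y (h + k)),
          MemLp.coeFn_toLp (memDN y h), MemLp.coeFn_toLp (memDN y k),
          Lp.coeFn_add ((memDN y h).toLp _) ((memDN y k).toLp _),
          Lp.coeFn_add h k] with x e1 e2 e3 e4 e5
        rw [e1, e4, Pi.add_apply, e2, e3, e5, Pi.add_apply]
        ring
      map_smul' := fun c h => by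
        apply Lp.ext
        filter_upwards [MemLp.coeFn_toLp (memDN y (c • h)),
          MemLp.coeFn_toLp (memDN y h),
          Lp.coeFn_smul c ((memDN y h).toLp _),
          Lp.coeFn_smul c h] with x e1 e2 e3 e4
        rw [RingHom.id_apply, e1, e3, Pi.smul_apply, e2, e4, Pi.smul_apply,
          smul_eq_mul, smul_eq_mul]
        ring } with hDNl
  set DNf : Lp ℝ p μ → (Lp ℝ p μ →L[ℝ] Lp ℝ 2 μ) := fun y =>
    LinearMap.mkContinuous (DNl y) ((ENNReal.ofReal K₃ * Cp).toReal)
      (fun h => bd1 y h) with hDNf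
  have DNf_coe : ∀ y h : Lp ℝ p μ,
      ⇑(DNf y h) =ᵐ[μ] fun x => g' (y x) * h x := fun y h =>
    MemLp.coeFn_toLp (memDN y h)
  have Nf_coe : ∀ u : Lp ℝ p μ, ⇑(Nf u) =ᵐ[μ] fun x => g (u x) := fun u =>
    MemLp.coeFn_toLp (memN u)
  refine ⟨Nf, DNf, Nf_coe, ?_, DNf_coe, ?_⟩
  · -- first Fréchet derivative
    intro y
    rw [hasFDerivAt_iff_isLittleO_nhds_zero]
    refine quadO _ ((ENNReal.ofReal K₂ * C2).toReal) fun h => ?_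
    have hae : ⇑(Nf (y + h) - Nf y - DNf y h) =ᵐ[μ]
        fun x => g (y x + h x) - g (y x) - g' (y x) * h x := by
      filter_upwards [Lp.coeFn_sub (Nf (y + h) - Nf y) (DNf y h),
        Lp.coeFn_sub (Nf (y + h)) (Nf y), Nf_coe (y + h), Nf_coe y,
        DNf_coe y h, Lp.coeFn_add y h] with x e1 e2 e3 e4 e5 e6
      rw [e1, Pi.sub_apply, e2, Pi.sub_apply, e3, e4, e5, e6, Pi.add_apply]
    rw [Lp.norm_def, eLpNorm_congr_ae hae]
    refine toReal_helper (ENNReal.mul_ne_top ENNReal.ofReal_ne_top hC2fin)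
      (by positivity) ?_
    have hsm : AEStronglyMeasurable
        (fun x => g (y x + h x) - g (y x) - g' (y x) * h x) μ := by
      refine AEStronglyMeasurable.sub (AEStronglyMeasurable.sub ?_ (aeg g hgmeas y))
        ((aeg g' hg'meas y).mul (aesm h))
      exact (hgmeas.comp_aemeasurable
        ((aesm y).aemeasurable.add (aesm h).aemeasurable)).aestronglyMeasurable
    refine key2 K₂ hK₂ _ h h hsm fun x => ?_
    have e : |h x * h x| = h x ^ 2 := by rw [abs_mul_self, sq]
    rw [e]
    exact T1 (y x) (h x)
  · -- second derivative
    intro y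
    have bd2 : ∀ h k : Lp ℝ p μ,
        ‖(memB y h k).toLp _‖ ≤ (ENNReal.ofReal K₂ * C2).toReal * ‖h‖ * ‖k‖ := by
      intro h k
      rw [Lp.norm_toLp, mul_assoc]
      refine toReal_helper (ENNReal.mul_ne_top ENNReal.ofReal_ne_top hC2fin)
        (by positivity) ?_
      refine key2 K₂ hK₂ _ h k (((aeg g'' hg''meas y).mul (aesm h)).mul (aesm k))
        fun x => ?_
      have e : |g'' (y x) * h x * k x| = |g'' (y x)| * |h x * k x| := by
        rw [abs_mul, abs_mul, abs_mul]; ring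
      rw [e]
      exact mul_le_mul_of_nonneg_right (hg''bd _) (abs_nonneg _)
    set B2 : Lp ℝ p μ →ₗ[ℝ] Lp ℝ p μ →ₗ[ℝ] Lp ℝ 2 μ :=
      LinearMap.mk₂ ℝ (fun h k => (memB y h k).toLp _)
        (fun h₁ h₂ k => by
          apply Lp.ext
          filter_upwards [MemLp.coeFn_toLp (memB y (h₁ + h₂) k),
            MemLp.coeFn_toLp (memB y h₁ k), MemLp.coeFn_toLp (memB y h₂ k),
            Lp.coeFn_add ((memB y h₁ k).toLp _) ((memB y h₂ k).toLp _),
            Lp.coeFn_add h₁ h₂] with x e1 e2 e3 e4 e5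
          rw [e1, e4, Pi.add_apply, e2, e3, e5, Pi.add_apply]
          ring)
        (fun c h k => by
          apply Lp.ext
          filter_upwards [MemLp.coeFn_toLp (memB y (c • h) k),
            MemLp.coeFn_toLp (memB y h k),
            Lp.coeFn_smul c ((memB y h k).toLp _),
            Lp.coeFn_smul c h] with x e1 e2 e3 e4
          rw [e1, e3, Pi.smul_apply, e2, e4, Pi.smul_apply, smul_eq_mul, smul_eq_mul]
          ring)
        (fun h k₁ k₂ => by
          apply Lp.ext
          filter_upwards [MemLp.coeFn_toLp (memB y h (k₁ + k₂)),
            MemLp.coeFn_toLp (memB y h k₁), MemLp.coeFn_toLp (memB y h k₂),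
            Lp.coeFn_add ((memB y h k₁).toLp _) ((memB y h k₂).toLp _),
            Lp.coeFn_add k₁ k₂] with x e1 e2 e3 e4 e5
          rw [e1, e4, Pi.add_apply, e2, e3, e5, Pi.add_apply]
          ring)
        (fun c h k => by
          apply Lp.ext
          filter_upwards [MemLp.coeFn_toLp (memB y h (c • k)),
            MemLp.coeFn_toLp (memB y h k),
            Lp.coeFn_smul c ((memB y h k).toLp _),
            Lp.coeFn_smul c k] with x e1 e2 e3 e4
          rw [e1, e3, Pi.smul_apply, e2, e4, Pi.smul_apply, smul_eq_mul, smul_eq_mul]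
          ring) with hB2
    set D2 : Lp ℝ p μ →L[ℝ] Lp ℝ p μ →L[ℝ] Lp ℝ 2 μ :=
      LinearMap.mkContinuous₂ B2 ((ENNReal.ofReal K₂ * C2).toReal)
        (fun h k => bd2 h k) with hD2
    have D2_coe : ∀ h k : Lp ℝ p μ,
        ⇑(D2 h k) =ᵐ[μ] fun x => g'' (y x) * h x * k x := fun h k =>
      MemLp.coeFn_toLp (memB y h k)
    refine ⟨D2, ?_, D2_coe⟩
    rw [hasFDerivAt_iff_isLittleO_nhds_zero]
    refine quadO _ ((ENNReal.ofReal L' * C3).toReal) fun k => ?_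
    refine ContinuousLinearMap.opNorm_le_bound _
      (mul_nonneg ENNReal.toReal_nonneg (by positivity)) fun h => ?_
    have happ : (DNf (y + k) - DNf y - D2 k) h
        = DNf (y + k) h - DNf y h - D2 k h := by
      simp [ContinuousLinearMap.sub_apply]
    rw [happ]
    have hae : ⇑(DNf (y + k) h - DNf y h - D2 k h) =ᵐ[μ]
        fun x => g' (y x + k x) * h x - g' (y x) * h x - g'' (y x) * k x * h x := by
      filter_upwards [Lp.coeFn_sub (DNf (y + k) h - DNf y h) (D2 k h),
        Lp.coeFn_sub (DNf (y + k) h) (DNf y h), DNf_coe (y + k) h, DNf_coe y h,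
        D2_coe k h, Lp.coeFn_add y k] with x e1 e2 e3 e4 e5 e6
      rw [e1, Pi.sub_apply, e2, Pi.sub_apply, e3, e4, e5, e6, Pi.add_apply]
    rw [Lp.norm_def, eLpNorm_congr_ae hae]
    have hsm : AEStronglyMeasurable
        (fun x => g' (y x + k x) * h x - g' (y x) * h x - g'' (y x) * k x * h x) μ := by
      refine AEStronglyMeasurable.sub (AEStronglyMeasurable.sub ?_
        ((aeg g' hg'meas y).mul (aesm h)))
        (((aeg g'' hg''meas y).mul (aesm k)).mul (aesm h))
      exact ((hg'meas.comp_aemeasurable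
        ((aesm y).aemeasurable.add (aesm k).aemeasurable)).aestronglyMeasurable).mul
        (aesm h)
    have hkey := key3 L' hL'.le _ k k h hsm (fun x => ?_)
    · have := toReal_helper (ENNReal.mul_ne_top ENNReal.ofReal_ne_top hC3fin)
        (by positivity) hkey
      refine this.trans (le_of_eq (by ring))
    · have e1 : g' (y x + k x) * h x - g' (y x) * h x - g'' (y x) * k x * h x
          = (g' (y x + k x) - g' (y x) - g'' (y x) * k x) * h x := by ring
      have e2 : |k x * k x * h x| = k x ^ 2 * |h x| := by
        rw [abs_mul, abs_mul_self, sq]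
      rw [e1, abs_mul, e2, ← mul_assoc]
      exact mul_le_mul_of_nonneg_right (T2 (y x) (k x)) (abs_nonneg _)
end

section
/- Let Ω ⊂ ℝ^d be a bounded measurable set with finite positive Lebesgue measure |Ω| and let 6 ≤ β < ∞. Let g : ℝ → ℝ be twice differentiable with second derivative g'' globally Lipschitz continuous with constant L̃ > 0. Then for all y, h ∈ L^β(Ω), the function x ↦ g(y(x)+h(x)) − g(y(x)) − g'(y(x)) h(x) − (1/2) g''(y(x)) h(x)² belongs to L²(Ω) and its L²(Ω) norm is at most (L̃/6) |Ω|^{(β−6)/(2β)} ‖h‖³_{L^β(Ω)}. -/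
open MeasureTheory ENNReal

/-- If `F 0 = 0`, `F` has derivative `D`, `D` is nonneg on nonnegatives and nonpos on
nonpositives, then `F` is nonnegative. -/
lemma aux_nonneg_of_deriv (F D : ℝ → ℝ) (hF : ∀ u, HasDerivAt F (D u) u) (h0 : F 0 = 0)
    (hpos : ∀ u, 0 ≤ u → 0 ≤ D u) (hneg : ∀ u, u ≤ 0 → D u ≤ 0) : ∀ s, 0 ≤ F s := by
  intro s
  rcases le_total 0 s with hs | hs
  · have hmono : MonotoneOn F (Set.Ici 0) := by
      apply monotoneOn_of_hasDerivWithinAt_nonneg (convex_Ici 0)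
        (fun u _ => (hF u).continuousAt.continuousWithinAt)
        (fun u _ => (hF u).hasDerivWithinAt)
      intro u hu
      rw [interior_Ici] at hu
      exact hpos u (le_of_lt hu)
    have := hmono (Set.self_mem_Ici) hs hs
    rwa [h0] at this
  · have hanti : AntitoneOn F (Set.Iic 0) := by
      apply antitoneOn_of_hasDerivWithinAt_nonpos (convex_Iic 0)
        (fun u _ => (hF u).continuousAt.continuousWithinAt)
        (fun u _ => (hF u).hasDerivWithinAt)
      intro u hu
      rw [interior_Iic] at hu
      exact hneg u (le_of_lt hu)
    have := hanti hs (Set.self_mem_Iic) hs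
    rwa [h0] at this

/-- First-order Taylor bound for `g'` with Lipschitz `g''`. -/
lemma aux_taylor_one (g' g'' : ℝ → ℝ) (hg'' : ∀ t : ℝ, HasDerivAt g' (g'' t) t)
    (L' : ℝ) (hlip : ∀ a b : ℝ, |g'' a - g'' b| ≤ L' * |a - b|) (a s : ℝ) :
    |g' (a + s) - g' a - g'' a * s| ≤ L' / 2 * s ^ 2 := by
  have hψ : ∀ u : ℝ, HasDerivAt (fun u => g' (a + u) - g' a - g'' a * u)
      (g'' (a + u) - g'' a) u := by
    intro u
    have h1 : HasDerivAt (fun u : ℝ => g' (a + u)) (g'' (a + u)) u := by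
      simpa [Function.comp_def] using (hg'' (a + u)).comp u ((hasDerivAt_id u).const_add a)
    simpa [Pi.sub_def] using (h1.sub_const (g' a)).sub ((hasDerivAt_id u).const_mul (g'' a))
  have hq : ∀ u : ℝ, HasDerivAt (fun u : ℝ => L' / 2 * u ^ 2) (L' * u) u := by
    intro u
    have := (hasDerivAt_pow 2 u).const_mul (L' / 2)
    refine this.congr_deriv ?_
    ring
  have hbd : ∀ u : ℝ, |g'' (a + u) - g'' a| ≤ L' * |u| := by
    intro u
    simpa using hlip (a + u) a
  have key1 : ∀ u, 0 ≤ L' / 2 * u ^ 2 - (g' (a + u) - g' a - g'' a * u) := by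
    apply aux_nonneg_of_deriv _ (fun u => L' * u - (g'' (a + u) - g'' a))
    · intro u; exact (hq u).sub (hψ u)
    · simp
    · intro u hu
      have := (abs_le.mp (hbd u)).2
      rw [abs_of_nonneg hu] at this
      linarith
    · intro u hu
      have := (abs_le.mp (hbd u)).1
      rw [abs_of_nonpos hu] at this
      linarith
  have key2 : ∀ u, 0 ≤ L' / 2 * u ^ 2 + (g' (a + u) - g' a - g'' a * u) := by
    apply aux_nonneg_of_deriv _ (fun u => L' * u + (g'' (a + u) - g'' a))
    · intro u; exact (hq u).add (hψ u)
    · simp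
    · intro u hu
      have := (abs_le.mp (hbd u)).1
      rw [abs_of_nonneg hu] at this
      linarith
    · intro u hu
      have := (abs_le.mp (hbd u)).2
      rw [abs_of_nonpos hu] at this
      linarith
  have h1 := key1 s
  have h2 := key2 s
  rw [abs_le]
  constructor <;> linarith

/-- Second-order Taylor bound. -/
lemma aux_taylor_two (g g' g'' : ℝ → ℝ)
    (hg' : ∀ t : ℝ, HasDerivAt g (g' t) t) (hg'' : ∀ t : ℝ, HasDerivAt g' (g'' t) t)
    (L' : ℝ) (hlip : ∀ a b : ℝ, |g'' a - g'' b| ≤ L' * |a - b|) (a t : ℝ) :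
    |g (a + t) - g a - g' a * t - (1 / 2) * g'' a * t ^ 2| ≤ L' / 6 * |t| ^ 3 := by
  set φ : ℝ → ℝ := fun s => g (a + s) - g a - g' a * s - (1 / 2) * g'' a * s ^ 2 with hφdef
  have hφ : ∀ s : ℝ, HasDerivAt φ (g' (a + s) - g' a - g'' a * s) s := by
    intro s
    have h1 : HasDerivAt (fun s : ℝ => g (a + s)) (g' (a + s)) s := by
      simpa [Function.comp_def] using (hg' (a + s)).comp s ((hasDerivAt_id s).const_add a)
    have h2 : HasDerivAt (fun s : ℝ => (1 / 2) * g'' a * s ^ 2) (g'' a * s) s := by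
      have := (hasDerivAt_pow 2 s).const_mul ((1 / 2) * g'' a)
      refine this.congr_deriv ?_
      ring
    have h3 := ((h1.sub_const (g a)).sub ((hasDerivAt_id s).const_mul (g' a))).sub h2
    refine h3.congr_deriv ?_
    ring
  have hc : ∀ s : ℝ, HasDerivAt (fun s : ℝ => L' / 6 * s ^ 3) (L' / 2 * s ^ 2) s := by
    intro s
    have := (hasDerivAt_pow 3 s).const_mul (L' / 6)
    refine this.congr_deriv ?_
    ring
  have hψbd := aux_taylor_one g' g'' hg'' L' hlip a
  have key1 : Monotone (fun s => L' / 6 * s ^ 3 - φ s) := by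
    apply monotone_of_hasDerivAt_nonneg
      (f' := fun s => L' / 2 * s ^ 2 - (g' (a + s) - g' a - g'' a * s))
    · intro s; exact (hc s).sub (hφ s)
    · intro s
      have := (abs_le.mp (hψbd s)).2
      simp only [Pi.zero_apply]
      linarith
  have key2 : Monotone (fun s => L' / 6 * s ^ 3 + φ s) := by
    apply monotone_of_hasDerivAt_nonneg
      (f' := fun s => L' / 2 * s ^ 2 + (g' (a + s) - g' a - g'' a * s))
    · intro s; exact (hc s).add (hφ s)
    · intro s
      have := (abs_le.mp (hψbd s)).1
      simp only [Pi.zero_apply]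
      linarith
  have hφ0 : φ 0 = 0 := by simp [hφdef]
  rw [show g (a + t) - g a - g' a * t - (1 / 2) * g'' a * t ^ 2 = φ t from rfl, abs_le]
  rcases le_total 0 t with ht | ht
  · have h1 := key1 ht
    have h2 := key2 ht
    simp only [hφ0] at h1 h2
    rw [abs_of_nonneg ht]
    constructor <;> nlinarith
  · have h1 := key1 ht
    have h2 := key2 ht
    simp only [hφ0] at h1 h2
    rw [abs_of_nonpos ht]
    constructor <;> nlinarith

/-- Second-order Taylor estimate in `L²(Ω)` for the Nemytskii operator: for `β ≥ 6` and
`g` twice differentiable with `g''` globally Lipschitz with constant `L̃ > 0`, and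
`y, h ∈ L^β(Ω)`,
`‖g∘(y+h) − g∘y − (g'∘y)·h − ½(g''∘y)·h²‖_{L²} ≤ (L̃/6) |Ω|^{(β−6)/(2β)} ‖h‖³_{L^β}`. -/
theorem nemytskii_second_order_taylor_estimate
    {d : ℕ} (Ω : Set (Fin d → ℝ))
    (hΩbdd : Bornology.IsBounded Ω) (hΩmeas : MeasurableSet Ω)
    (hΩpos : 0 < volume Ω) (hΩfin : volume Ω < ⊤)
    (μ : Measure (Fin d → ℝ)) (hμ : μ = volume.restrict Ω)
    (β : ℝ) (hβ : 6 ≤ β)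
    (g g' g'' : ℝ → ℝ)
    (hg' : ∀ t : ℝ, HasDerivAt g (g' t) t)
    (hg'' : ∀ t : ℝ, HasDerivAt g' (g'' t) t)
    (L' : ℝ) (hL' : 0 < L')
    (hg''lip : ∀ a b : ℝ, |g'' a - g'' b| ≤ L' * |a - b|) :
    ∀ y h : (Fin d → ℝ) → ℝ,
      MemLp y (ENNReal.ofReal β) μ → MemLp h (ENNReal.ofReal β) μ →
      MemLp (fun x =>
        g (y x + h x) - g (y x) - g' (y x) * h x - (1 / 2) * g'' (y x) * h x ^ 2) 2 μ ∧
      eLpNorm (fun x =>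
          g (y x + h x) - g (y x) - g' (y x) * h x - (1 / 2) * g'' (y x) * h x ^ 2) 2 μ ≤
        ENNReal.ofReal (L' / 6) * volume Ω ^ ((β - 6) / (2 * β)) *
          eLpNorm h (ENNReal.ofReal β) μ ^ (3 : ℕ) := by
  intro y h hy hh
  have hβ0 : (0 : ℝ) < β := by linarith
  have hμuniv : μ Set.univ = volume Ω := by
    rw [hμ, Measure.restrict_apply_univ]
  haveI : IsFiniteMeasure μ := ⟨by rw [hμuniv]; exact hΩfin⟩
  set f : (Fin d → ℝ) → ℝ := fun x =>
    g (y x + h x) - g (y x) - g' (y x) * h x - (1 / 2) * g'' (y x) * h x ^ 2 with hfdef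
  -- pointwise bound
  have hbound : ∀ x, ‖f x‖ ≤ ‖L' / 6 * |h x| ^ 3‖ := by
    intro x
    have := aux_taylor_two g g' g'' hg' hg'' L' hg''lip (y x) (h x)
    rw [Real.norm_eq_abs, Real.norm_eq_abs]
    calc |f x| ≤ L' / 6 * |h x| ^ 3 := this
      _ ≤ |L' / 6 * |h x| ^ 3| := le_abs_self _
  -- measurability
  have hgd : Differentiable ℝ g := fun t => (hg' t).differentiableAt
  have hgc : Continuous g := hgd.continuous
  have hg'd : Differentiable ℝ g' := fun t => (hg'' t).differentiableAt
  have hg'c : Continuous g' := hg'd.continuous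
  have hg''c : Continuous g'' := by
    have hlw : LipschitzWith (Real.toNNReal L') g'' := by
      apply LipschitzWith.of_dist_le_mul
      intro a b
      simpa [Real.dist_eq, Real.coe_toNNReal L' hL'.le] using hg''lip a b
    exact hlw.continuous
  have hym := hy.aestronglyMeasurable
  have hhm := hh.aestronglyMeasurable
  have hfm : AEStronglyMeasurable f μ := by
    apply AEStronglyMeasurable.sub
    apply AEStronglyMeasurable.sub
    apply AEStronglyMeasurable.sub
    · exact hgc.comp_aestronglyMeasurable (hym.add hhm)
    · exact hgc.comp_aestronglyMeasurable hym
    · exact (hg'c.comp_aestronglyMeasurable hym).mul hhm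
    · exact (aestronglyMeasurable_const.mul
        (hg''c.comp_aestronglyMeasurable hym)).mul (hhm.pow 2)
  -- norm chain
  have h6β : (6 : ℝ≥0∞) ≤ ENNReal.ofReal β := by
    rw [show (6 : ℝ≥0∞) = ENNReal.ofReal 6 by norm_num]
    exact ENNReal.ofReal_le_ofReal hβ
  have hstep1 : eLpNorm f 2 μ ≤ eLpNorm (fun x => L' / 6 * |h x| ^ 3) 2 μ :=
    eLpNorm_mono hbound
  have hstep2 : eLpNorm (fun x => L' / 6 * |h x| ^ 3) 2 μ =
      ENNReal.ofReal (L' / 6) * eLpNorm (fun x => |h x| ^ 3) 2 μ := by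
    have heq := eLpNorm_const_smul (L' / 6 : ℝ) (fun x : Fin d → ℝ => |h x| ^ 3) 2 μ
    rw [show (fun x => L' / 6 * |h x| ^ 3) = (L' / 6 : ℝ) • (fun x : Fin d → ℝ => |h x| ^ 3) by
        funext x; simp, heq]
    congr 1
    rw [← ofReal_norm, Real.norm_eq_abs,
      abs_of_nonneg (by positivity : (0:ℝ) ≤ L' / 6)]
  have hstep3 : eLpNorm (fun x => |h x| ^ 3) 2 μ = eLpNorm h 6 μ ^ (3 : ℝ) := by
    have := eLpNorm_norm_rpow (p := 2) (μ := μ) h (by norm_num : (0:ℝ) < 3)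
    simp only [Real.norm_eq_abs] at this
    rw [show (fun x => |h x| ^ (3:ℕ)) = fun x => |h x| ^ (3:ℝ) by
        ext x; rw [← Real.rpow_natCast |h x| 3]; norm_num,
      this]
    congr 1
    rw [show (ENNReal.ofReal 3) = (3 : ℝ≥0∞) by norm_num]
    norm_num
  have hstep4 : eLpNorm h 6 μ ≤
      eLpNorm h (ENNReal.ofReal β) μ * μ Set.univ ^ (1 / 6 - 1 / β : ℝ) := by
    have h0 := eLpNorm_le_eLpNorm_mul_rpow_measure_univ (p := 6) (q := ENNReal.ofReal β) h6β hhm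
    have e1 : ((6 : ℝ≥0∞)).toReal = (6 : ℝ) := by norm_num
    rw [e1, ENNReal.toReal_ofReal hβ0.le] at h0
    exact h0
  have hexp : ((1 : ℝ) / 6 - 1 / β) * 3 = (β - 6) / (2 * β) := by
    field_simp
    ring
  have hexp_nonneg : (0:ℝ) ≤ (β - 6) / (2 * β) := div_nonneg (by linarith) (by linarith)
  have hchain : eLpNorm f 2 μ ≤
      ENNReal.ofReal (L' / 6) * volume Ω ^ ((β - 6) / (2 * β)) *
        eLpNorm h (ENNReal.ofReal β) μ ^ (3 : ℕ) := by
    calc eLpNorm f 2 μ ≤ eLpNorm (fun x => L' / 6 * |h x| ^ 3) 2 μ := hstep1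
      _ = ENNReal.ofReal (L' / 6) * eLpNorm h 6 μ ^ (3 : ℝ) := by rw [hstep2, hstep3]
      _ ≤ ENNReal.ofReal (L' / 6) *
          (eLpNorm h (ENNReal.ofReal β) μ * μ Set.univ ^ (1 / 6 - 1 / β : ℝ)) ^ (3 : ℝ) := by
          gcongr
      _ = ENNReal.ofReal (L' / 6) * volume Ω ^ ((β - 6) / (2 * β)) *
          eLpNorm h (ENNReal.ofReal β) μ ^ (3 : ℕ) := by
          rw [ENNReal.mul_rpow_of_nonneg _ _ (by norm_num : (0:ℝ) ≤ 3),
            ← ENNReal.rpow_natCast (eLpNorm h (ENNReal.ofReal β) μ) 3,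
            ← ENNReal.rpow_mul, hexp, hμuniv]
          push_cast
          ring
  refine ⟨⟨hfm, ?_⟩, hchain⟩
  apply lt_of_le_of_lt hchain
  apply ENNReal.mul_lt_top
  · apply ENNReal.mul_lt_top ENNReal.ofReal_lt_top
    exact ENNReal.rpow_lt_top_of_nonneg hexp_nonneg hΩfin.ne
  · exact ENNReal.pow_lt_top hh.2
end
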